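/- If d divides n (with n ≥ d ≥ 1) and d ≥ m ≥ 2, then for every integer i with 0 ≤ i ≤ d − m, P(n − i, m, d) = (n/d)^m. -/
import Mathlib


/-- The Chebyshev distance between two functions on `{1,…,m}`
(represented on `Fin m`): `max_i |σ(i) − τ(i)|`. -/
def cheb {m : ℕ} (σ τ : Fin m → ℕ) : ℕ :=
  Finset.univ.sup fun i => Nat.dist (σ i) (τ i)

/-- `Pnm n m d` is the maximum cardinality of a set of injective functions
from `{1,…,m}` to `{1,…,n}` whose pairwise Chebyshev distance is at least
`d`. -/
noncomputable def Pnm (n m d : ℕ) : ℕ :=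
  sSup {k | ∃ A : Finset (Fin m → ℕ),
    (∀ σ ∈ A, Function.Injective σ ∧ ∀ i, σ i ∈ Finset.Icc 1 n) ∧
    (∀ σ ∈ A, ∀ τ ∈ A, σ ≠ τ → d ≤ cheb σ τ) ∧ A.card = k}

/-- If `d ∣ n` (with `n ≥ d ≥ 1`) and `d ≥ m ≥ 2`, then for every `i` with
`0 ≤ i ≤ d − m`, `P(n − i, m, d) = (n/d)^m`. -/
theorem stmt19 (n m d : ℕ) (hdvd : d ∣ n) (hd : 1 ≤ d) (hdn : d ≤ n)
    (hm : 2 ≤ m) (hmd : m ≤ d) :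
    ∀ i : ℕ, i ≤ d - m → Pnm (n - i) m d = (n / d) ^ m := by
  intro i hi
  obtain ⟨q, hq⟩ := hdvd
  have hq1 : 1 ≤ q := by
    rcases Nat.eq_zero_or_pos q with h | h
    · subst h; omega
    · exact h
  have hnd : n / d = q := by rw [hq, Nat.mul_div_cancel_left q hd]
  rw [hnd]
  have hmpos : 0 < m := by omega
  have hdpos : 0 < d := hd
  have hn' : n = q * d := by rw [hq, Nat.mul_comm]
  haveI : Nonempty (Fin m) := ⟨⟨0, hmpos⟩⟩
  set S : Set ℕ := {k | ∃ A : Finset (Fin m → ℕ),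
    (∀ σ ∈ A, Function.Injective σ ∧ ∀ j, σ j ∈ Finset.Icc 1 (n - i)) ∧
    (∀ σ ∈ A, ∀ τ ∈ A, σ ≠ τ → d ≤ cheb σ τ) ∧ A.card = k} with hS
  -- Upper bound: every k ∈ S satisfies k ≤ q ^ m
  have hub : ∀ k ∈ S, k ≤ q ^ m := by
    rintro k ⟨A, hA1, hA2, rfl⟩
    -- block map
    set F : (Fin m → ℕ) → (Fin m → Fin q) :=
      fun σ j => ⟨min ((σ j - 1) / d) (q - 1), by omega⟩ with hF
    have hblock : ∀ σ ∈ A, ∀ j, (σ j - 1) / d < q := by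
      intro σ hσ j
      have h := (hA1 σ hσ).2 j
      simp only [Finset.mem_Icc] at h
      have : σ j - 1 < q * d := by omega
      exact Nat.div_lt_iff_lt_mul hdpos |>.mpr this
    have hinjF : Set.InjOn F A := by
      intro σ hσ τ hτ hFeq
      by_contra hne
      have hdist := hA2 σ hσ τ hτ hne
      obtain ⟨j, _, hj⟩ := Finset.exists_mem_eq_sup (Finset.univ : Finset (Fin m))
        (Finset.univ_nonempty) (fun j => Nat.dist (σ j) (τ j))
      rw [cheb, hj] at hdist
      -- same block ⇒ distance < d
      have hq1' : (σ j - 1) / d = (τ j - 1) / d := by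
        have := congrFun hFeq j
        simp only [hF, Fin.mk.injEq] at this
        have b1 := hblock σ hσ j
        have b2 := hblock τ hτ j
        rw [min_eq_left (by omega), min_eq_left (by omega)] at this
        exact this
      have hσj := (hA1 σ hσ).2 j
      have hτj := (hA1 τ hτ).2 j
      simp only [Finset.mem_Icc] at hσj hτj
      have e1 : d * ((σ j - 1) / d) + (σ j - 1) % d = σ j - 1 := Nat.div_add_mod _ d
      have e2 : d * ((τ j - 1) / d) + (τ j - 1) % d = τ j - 1 := Nat.div_add_mod _ d
      rw [hq1'] at e1
      have m1 : (σ j - 1) % d < d := Nat.mod_lt _ hdpos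
      have m2 : (τ j - 1) % d < d := Nat.mod_lt _ hdpos
      have hdd : Nat.dist (σ j) (τ j) = σ j - τ j + (τ j - σ j) := rfl
      rw [hdd] at hdist
      generalize d * ((τ j - 1) / d) = K at e1 e2
      omega
    calc A.card ≤ (Finset.univ : Finset (Fin m → Fin q)).card :=
          Finset.card_le_card_of_injOn F (fun _ _ => Finset.mem_univ _) hinjF
      _ = q ^ m := by simp [Finset.card_univ]
  -- Lower bound: q ^ m ∈ S
  have hmem : q ^ m ∈ S := by
    set g : (Fin m → Fin q) → (Fin m → ℕ) :=
      fun b j => (b j : ℕ) * d + (j : ℕ) + 1 with hg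
    have hginj : Function.Injective g := by
      intro b b' h
      funext j
      have := congrFun h j
      simp only [hg] at this
      have : (b j : ℕ) = (b' j : ℕ) := by
        have hmul : (b j : ℕ) * d = (b' j : ℕ) * d := by omega
        exact Nat.eq_of_mul_eq_mul_right hdpos hmul
      exact Fin.ext this
    refine ⟨Finset.image g Finset.univ, ?_, ?_, ?_⟩
    · rintro σ hσ
      simp only [Finset.mem_image] at hσ
      obtain ⟨b, _, rfl⟩ := hσ
      constructor
      · intro j j' hjj
        simp only [hg] at hjj
        have h0 : (b j : ℕ) * d + (j : ℕ) = (b j' : ℕ) * d + (j' : ℕ) := by omega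
        have h1 := congrArg (fun x => x % d) h0
        rw [Nat.add_comm ((b j : ℕ) * d), Nat.add_comm ((b j' : ℕ) * d)] at h1
        simp only [Nat.add_mul_mod_self_right] at h1
        rw [Nat.mod_eq_of_lt (by omega : (j : ℕ) < d),
          Nat.mod_eq_of_lt (by omega : (j' : ℕ) < d)] at h1
        exact Fin.ext h1
      · intro j
        simp only [hg, Finset.mem_Icc]
        constructor
        · omega
        · have hb : (b j : ℕ) + 1 ≤ q := (b j).isLt
          have h2 : ((b j : ℕ) + 1) * d ≤ q * d := Nat.mul_le_mul_right d hb
          rw [add_one_mul] at h2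
          have hj : (j : ℕ) < m := j.isLt
          omega
    · rintro σ hσ τ hτ hne
      simp only [Finset.mem_image] at hσ hτ
      obtain ⟨b, _, rfl⟩ := hσ
      obtain ⟨b', _, rfl⟩ := hτ
      have hbb : b ≠ b' := fun h => hne (by rw [h])
      obtain ⟨j, hj⟩ := Function.ne_iff.mp hbb
      have hjd : d ≤ Nat.dist ((b j : ℕ) * d + (j : ℕ) + 1) ((b' j : ℕ) * d + (j : ℕ) + 1) := by
        have hdd : ∀ a c : ℕ, Nat.dist a c = a - c + (c - a) := fun _ _ => rfl
        rw [hdd]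
        rcases Nat.lt_or_ge (b j : ℕ) (b' j : ℕ) with h | h
        · have h2 : ((b j : ℕ) + 1) * d ≤ (b' j : ℕ) * d := Nat.mul_le_mul_right d h
          rw [add_one_mul] at h2
          omega
        · have h' : (b' j : ℕ) < (b j : ℕ) := by
            rcases Nat.lt_or_ge (b' j : ℕ) (b j : ℕ) with h2 | h2
            · exact h2
            · exact absurd (Fin.ext (le_antisymm h2 h)) hj
          have h2 : ((b' j : ℕ) + 1) * d ≤ (b j : ℕ) * d := Nat.mul_le_mul_right d h'
          rw [add_one_mul] at h2
          omega
      calc d ≤ Nat.dist (g b j) (g b' j) := hjd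
        _ ≤ cheb (g b) (g b') := by
            unfold cheb
            exact Finset.le_sup (f := fun i => Nat.dist (g b i) (g b' i)) (Finset.mem_univ j)
    · rw [Finset.card_image_of_injective _ hginj]
      simp [Finset.card_univ]
  -- conclude
  have hbdd : BddAbove S := ⟨q ^ m, fun k hk => hub k hk⟩
  rw [Pnm]
  exact le_antisymm (csSup_le ⟨q ^ m, hmem⟩ hub) (le_csSup hbdd hmem)
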